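/- Let N ≥ 1 and let K : ℝ×ℝ → ℝ be measurable such that for every (x,y) ∈ ℝ², ∫∫ (1+|λ|)^{N−1} (1+|μ|)^{N−1} |K(λ,μ)| e^{xλ+yμ} dλ dμ < ∞. Then h(x,y) := ∫∫ K(λ,μ) e^{xλ+yμ} dλ dμ has partial derivatives ∂_x^{i−1}∂_y^{j−1} h(x,y) = ∫∫ λ^{i−1} μ^{j−1} K(λ,μ) e^{xλ+yμ} dλ dμ for 1 ≤ i, j ≤ N, and for every (x,y): (1/N!) ∫_{ℝ^N}∫_{ℝ^N} Δ(λ_1,…,λ_N) Δ(μ_1,…,μ_N) ∏_{k=1}^N K(λ_k,μ_k) e^{xλ_k+yμ_k} dλ dμ = det( ∂_x^{i−1}∂_y^{j−1} h(x,y) )_{i,j=1,…,N}. (This is the closed-form solution Z_N = det‖∂_{t̃_1}^{i−1}∂_{t_1}^{j−1} h_0‖ of the two-matrix and multi-matrix model partition functions.) -/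

import Mathlib

open MeasureTheory

/-- The Vandermonde product `Δ(l₁,…,l_N) = ∏_{j<i} (l_i − l_j)`. -/
noncomputable def vdm {N : ℕ} (l : Fin N → ℝ) : ℝ :=
  ∏ i : Fin N, ∏ j ∈ Finset.Ioi i, (l j - l i)

noncomputable def Fint (K : ℝ × ℝ → ℝ) (i j : ℕ) (x y : ℝ) : ℝ :=
  ∫ p : ℝ × ℝ, p.1 ^ i * p.2 ^ j * K p * Real.exp (x * p.1 + y * p.2)

lemma meas_integrand (K : ℝ × ℝ → ℝ) (hK : Measurable K) (i j : ℕ) (x y : ℝ) :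
    Measurable (fun p : ℝ × ℝ => p.1 ^ i * p.2 ^ j * K p * Real.exp (x * p.1 + y * p.2)) := by
  have : Measurable (fun p : ℝ × ℝ => Real.exp (x * p.1 + y * p.2)) :=
    (Real.continuous_exp.comp (by continuity)).measurable
  exact (((measurable_fst.pow_const i).mul (measurable_snd.pow_const j)).mul hK).mul this

lemma int_abs (N : ℕ) (K : ℝ × ℝ → ℝ) (hK : Measurable K)
    (hint : ∀ x y : ℝ, Integrable (fun p : ℝ × ℝ =>
      (1 + |p.1|) ^ (N - 1) * (1 + |p.2|) ^ (N - 1) * |K p| *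
        Real.exp (x * p.1 + y * p.2)))
    {i j : ℕ} (hi : i ≤ N - 1) (hj : j ≤ N - 1) (x y : ℝ) :
    Integrable (fun p : ℝ × ℝ =>
      |p.1| ^ i * |p.2| ^ j * |K p| * Real.exp (x * p.1 + y * p.2)) := by
  refine (hint x y).mono' ?_ ?_
  · exact ((((measurable_fst.abs.pow_const i).mul (measurable_snd.abs.pow_const j)).mul
      hK.abs).mul ((Real.continuous_exp.comp (by continuity)).measurable)).aestronglyMeasurable
  · refine Filter.Eventually.of_forall fun p => ?_
    have h1 : |p.1| ^ i ≤ (1 + |p.1|) ^ (N - 1) := by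
      calc |p.1| ^ i ≤ (1 + |p.1|) ^ i :=
            pow_le_pow_left₀ (abs_nonneg _) (by linarith [abs_nonneg p.1]) i
        _ ≤ (1 + |p.1|) ^ (N - 1) := by
            apply pow_le_pow_right₀ (by linarith [abs_nonneg p.1]) hi
    have h2 : |p.2| ^ j ≤ (1 + |p.2|) ^ (N - 1) := by
      calc |p.2| ^ j ≤ (1 + |p.2|) ^ j :=
            pow_le_pow_left₀ (abs_nonneg _) (by linarith [abs_nonneg p.2]) j
        _ ≤ (1 + |p.2|) ^ (N - 1) := by
            apply pow_le_pow_right₀ (by linarith [abs_nonneg p.2]) hj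
    have hnn : (0:ℝ) ≤ |p.1| ^ i * |p.2| ^ j * |K p| * Real.exp (x * p.1 + y * p.2) := by
      positivity
    rw [Real.norm_eq_abs, abs_of_nonneg hnn]
    exact mul_le_mul_of_nonneg_right (mul_le_mul_of_nonneg_right
      (mul_le_mul h1 h2 (pow_nonneg (abs_nonneg _) j) (by positivity)) (abs_nonneg _))
      (Real.exp_pos _).le

lemma int_main (N : ℕ) (K : ℝ × ℝ → ℝ) (hK : Measurable K)
    (hint : ∀ x y : ℝ, Integrable (fun p : ℝ × ℝ =>
      (1 + |p.1|) ^ (N - 1) * (1 + |p.2|) ^ (N - 1) * |K p| *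
        Real.exp (x * p.1 + y * p.2)))
    {i j : ℕ} (hi : i ≤ N - 1) (hj : j ≤ N - 1) (x y : ℝ) :
    Integrable (fun p : ℝ × ℝ =>
      p.1 ^ i * p.2 ^ j * K p * Real.exp (x * p.1 + y * p.2)) := by
  refine (int_abs N K hK hint hi hj x y).mono'
    (meas_integrand K hK i j x y).aestronglyMeasurable ?_
  refine Filter.Eventually.of_forall fun p => le_of_eq ?_
  rw [Real.norm_eq_abs]
  rw [abs_mul, abs_mul, abs_mul, abs_pow, abs_pow, Real.abs_exp]

lemma exp_bound_aux {y0 y b a : ℝ} (hy : y ∈ Metric.ball y0 1) :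
    Real.exp (a + y * b) ≤ Real.exp (a + (y0 - 1) * b) + Real.exp (a + (y0 + 1) * b) := by
  rw [Metric.mem_ball, Real.dist_eq, abs_lt] at hy
  rcases le_or_gt 0 b with hb | hb
  · have h1 : y * b ≤ (y0 + 1) * b := mul_le_mul_of_nonneg_right (by linarith) hb
    have h2 := Real.exp_le_exp.2 (show a + y * b ≤ a + (y0 + 1) * b by linarith)
    linarith [Real.exp_pos (a + (y0 - 1) * b)]
  · have h1 : y * b ≤ (y0 - 1) * b := mul_le_mul_of_nonpos_right (by linarith) hb.le
    have h2 := Real.exp_le_exp.2 (show a + y * b ≤ a + (y0 - 1) * b by linarith)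
    linarith [Real.exp_pos (a + (y0 + 1) * b)]


lemma hasDeriv_y (N : ℕ) (K : ℝ × ℝ → ℝ) (hK : Measurable K)
    (hint : ∀ x y : ℝ, Integrable (fun p : ℝ × ℝ =>
      (1 + |p.1|) ^ (N - 1) * (1 + |p.2|) ^ (N - 1) * |K p| *
        Real.exp (x * p.1 + y * p.2)))
    {i j : ℕ} (hi : i ≤ N - 1) (hj : j + 1 ≤ N - 1) (x y0 : ℝ) :
    HasDerivAt (fun y => Fint K i j x y) (Fint K i (j + 1) x y0) y0 := by
  have H := hasDerivAt_integral_of_dominated_loc_of_deriv_le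
    (μ := (volume : Measure (ℝ × ℝ)))
    (F := fun y p => p.1 ^ i * p.2 ^ j * K p * Real.exp (x * p.1 + y * p.2))
    (F' := fun y p => p.1 ^ i * p.2 ^ (j + 1) * K p * Real.exp (x * p.1 + y * p.2))
    (x₀ := y0)
    (bound := fun p => |p.1| ^ i * |p.2| ^ (j + 1) * |K p| *
      (Real.exp (x * p.1 + (y0 - 1) * p.2) + Real.exp (x * p.1 + (y0 + 1) * p.2)))
    (s := Metric.ball y0 1) (Metric.ball_mem_nhds y0 one_pos)
    (Filter.Eventually.of_forall fun y => (meas_integrand K hK i j x y).aestronglyMeasurable)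
    (int_main N K hK hint hi (le_trans (Nat.le_succ j) hj) x y0)
    ((meas_integrand K hK i (j + 1) x y0).aestronglyMeasurable)
    ?_ ?_ ?_
  · exact H.2
  · refine Filter.Eventually.of_forall fun p => fun y hy => ?_
    have hb := exp_bound_aux (a := x * p.1) (b := p.2) hy
    have hnn : (0:ℝ) ≤ |p.1| ^ i * |p.2| ^ (j + 1) * |K p| := by positivity
    calc ‖p.1 ^ i * p.2 ^ (j + 1) * K p * Real.exp (x * p.1 + y * p.2)‖
        = |p.1| ^ i * |p.2| ^ (j + 1) * |K p| * Real.exp (x * p.1 + y * p.2) := by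
          rw [Real.norm_eq_abs, abs_mul, abs_mul, abs_mul, abs_pow, abs_pow, Real.abs_exp]
      _ ≤ _ := mul_le_mul_of_nonneg_left hb hnn
  · simp_rw [mul_add]
    exact (int_abs N K hK hint hi hj x (y0 - 1)).add (int_abs N K hK hint hi hj x (y0 + 1))
  · refine Filter.Eventually.of_forall fun p => fun y _ => ?_
    have h1 : HasDerivAt (fun y : ℝ => x * p.1 + y * p.2) p.2 y := by
      simpa using ((hasDerivAt_id y).mul_const p.2).const_add (x * p.1)
    have h3 := (h1.exp).const_mul (p.1 ^ i * p.2 ^ j * K p)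
    exact h3.congr_deriv (by ring)

lemma cont_y (N : ℕ) (K : ℝ × ℝ → ℝ) (hK : Measurable K)
    (hint : ∀ x y : ℝ, Integrable (fun p : ℝ × ℝ =>
      (1 + |p.1|) ^ (N - 1) * (1 + |p.2|) ^ (N - 1) * |K p| *
        Real.exp (x * p.1 + y * p.2)))
    {i j : ℕ} (hi : i ≤ N - 1) (hj : j ≤ N - 1) (x : ℝ) :
    Continuous (fun y => Fint K i j x y) := by
  rw [continuous_iff_continuousAt]
  intro y0
  refine continuousAt_of_dominated
    (F := fun y p => p.1 ^ i * p.2 ^ j * K p * Real.exp (x * p.1 + y * p.2))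
    (bound := fun p => |p.1| ^ i * |p.2| ^ j * |K p| *
      (Real.exp (x * p.1 + (y0 - 1) * p.2) + Real.exp (x * p.1 + (y0 + 1) * p.2)))
    (Filter.Eventually.of_forall fun y => (meas_integrand K hK i j x y).aestronglyMeasurable)
    ?_ ?_ ?_
  · filter_upwards [Metric.ball_mem_nhds y0 one_pos] with y hy
    refine Filter.Eventually.of_forall fun p => ?_
    have hb := exp_bound_aux (a := x * p.1) (b := p.2) hy
    have hnn : (0:ℝ) ≤ |p.1| ^ i * |p.2| ^ j * |K p| := by positivity
    calc ‖p.1 ^ i * p.2 ^ j * K p * Real.exp (x * p.1 + y * p.2)‖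
        = |p.1| ^ i * |p.2| ^ j * |K p| * Real.exp (x * p.1 + y * p.2) := by
          rw [Real.norm_eq_abs, abs_mul, abs_mul, abs_mul, abs_pow, abs_pow, Real.abs_exp]
      _ ≤ _ := mul_le_mul_of_nonneg_left hb hnn
  · simp_rw [mul_add]
    exact (int_abs N K hK hint hi hj x (y0 - 1)).add (int_abs N K hK hint hi hj x (y0 + 1))
  · refine Filter.Eventually.of_forall fun p => ?_
    exact (continuous_const.mul (Real.continuous_exp.comp
      (continuous_const.add (continuous_id.mul continuous_const)))).continuousAt

lemma exp_bound_aux' {x0 x b a : ℝ} (hx : x ∈ Metric.ball x0 1) :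
    Real.exp (x * b + a) ≤ Real.exp ((x0 - 1) * b + a) + Real.exp ((x0 + 1) * b + a) := by
  rw [Metric.mem_ball, Real.dist_eq, abs_lt] at hx
  rcases le_or_gt 0 b with hb | hb
  · have h1 : x * b ≤ (x0 + 1) * b := mul_le_mul_of_nonneg_right (by linarith) hb
    have h2 := Real.exp_le_exp.2 (show x * b + a ≤ (x0 + 1) * b + a by linarith)
    linarith [Real.exp_pos ((x0 - 1) * b + a)]
  · have h1 : x * b ≤ (x0 - 1) * b := mul_le_mul_of_nonpos_right (by linarith) hb.le
    have h2 := Real.exp_le_exp.2 (show x * b + a ≤ (x0 - 1) * b + a by linarith)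
    linarith [Real.exp_pos ((x0 + 1) * b + a)]

lemma hasDeriv_x (N : ℕ) (K : ℝ × ℝ → ℝ) (hK : Measurable K)
    (hint : ∀ x y : ℝ, Integrable (fun p : ℝ × ℝ =>
      (1 + |p.1|) ^ (N - 1) * (1 + |p.2|) ^ (N - 1) * |K p| *
        Real.exp (x * p.1 + y * p.2)))
    {i j : ℕ} (hi : i + 1 ≤ N - 1) (hj : j ≤ N - 1) (x0 y : ℝ) :
    HasDerivAt (fun x => Fint K i j x y) (Fint K (i + 1) j x0 y) x0 := by
  have H := hasDerivAt_integral_of_dominated_loc_of_deriv_le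
    (μ := (volume : Measure (ℝ × ℝ)))
    (F := fun x p => p.1 ^ i * p.2 ^ j * K p * Real.exp (x * p.1 + y * p.2))
    (F' := fun x p => p.1 ^ (i + 1) * p.2 ^ j * K p * Real.exp (x * p.1 + y * p.2))
    (x₀ := x0)
    (bound := fun p => |p.1| ^ (i + 1) * |p.2| ^ j * |K p| *
      (Real.exp ((x0 - 1) * p.1 + y * p.2) + Real.exp ((x0 + 1) * p.1 + y * p.2)))
    (s := Metric.ball x0 1) (Metric.ball_mem_nhds x0 one_pos)
    (Filter.Eventually.of_forall fun x => (meas_integrand K hK i j x y).aestronglyMeasurable)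
    (int_main N K hK hint (le_trans (Nat.le_succ i) hi) hj x0 y)
    ((meas_integrand K hK (i + 1) j x0 y).aestronglyMeasurable)
    ?_ ?_ ?_
  · exact H.2
  · refine Filter.Eventually.of_forall fun p => fun x hx => ?_
    have hb := exp_bound_aux' (a := y * p.2) (b := p.1) hx
    have hnn : (0:ℝ) ≤ |p.1| ^ (i + 1) * |p.2| ^ j * |K p| := by positivity
    calc ‖p.1 ^ (i + 1) * p.2 ^ j * K p * Real.exp (x * p.1 + y * p.2)‖
        = |p.1| ^ (i + 1) * |p.2| ^ j * |K p| * Real.exp (x * p.1 + y * p.2) := by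
          rw [Real.norm_eq_abs, abs_mul, abs_mul, abs_mul, abs_pow, abs_pow, Real.abs_exp]
      _ ≤ _ := mul_le_mul_of_nonneg_left hb hnn
  · simp_rw [mul_add]
    exact (int_abs N K hK hint hi hj (x0 - 1) y).add (int_abs N K hK hint hi hj (x0 + 1) y)
  · refine Filter.Eventually.of_forall fun p => fun x _ => ?_
    have h1 : HasDerivAt (fun x : ℝ => x * p.1 + y * p.2) p.1 x := by
      simpa using ((hasDerivAt_id x).mul_const p.1).add_const (y * p.2)
    have h3 := (h1.exp).const_mul (p.1 ^ i * p.2 ^ j * K p)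
    exact h3.congr_deriv (by ring)

lemma cont_x (N : ℕ) (K : ℝ × ℝ → ℝ) (hK : Measurable K)
    (hint : ∀ x y : ℝ, Integrable (fun p : ℝ × ℝ =>
      (1 + |p.1|) ^ (N - 1) * (1 + |p.2|) ^ (N - 1) * |K p| *
        Real.exp (x * p.1 + y * p.2)))
    {i j : ℕ} (hi : i ≤ N - 1) (hj : j ≤ N - 1) (y : ℝ) :
    Continuous (fun x => Fint K i j x y) := by
  rw [continuous_iff_continuousAt]
  intro x0
  refine continuousAt_of_dominated
    (F := fun x p => p.1 ^ i * p.2 ^ j * K p * Real.exp (x * p.1 + y * p.2))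
    (bound := fun p => |p.1| ^ i * |p.2| ^ j * |K p| *
      (Real.exp ((x0 - 1) * p.1 + y * p.2) + Real.exp ((x0 + 1) * p.1 + y * p.2)))
    (Filter.Eventually.of_forall fun x => (meas_integrand K hK i j x y).aestronglyMeasurable)
    ?_ ?_ ?_
  · filter_upwards [Metric.ball_mem_nhds x0 one_pos] with x hx
    refine Filter.Eventually.of_forall fun p => ?_
    have hb := exp_bound_aux' (a := y * p.2) (b := p.1) hx
    have hnn : (0:ℝ) ≤ |p.1| ^ i * |p.2| ^ j * |K p| := by positivity
    calc ‖p.1 ^ i * p.2 ^ j * K p * Real.exp (x * p.1 + y * p.2)‖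
        = |p.1| ^ i * |p.2| ^ j * |K p| * Real.exp (x * p.1 + y * p.2) := by
          rw [Real.norm_eq_abs, abs_mul, abs_mul, abs_mul, abs_pow, abs_pow, Real.abs_exp]
      _ ≤ _ := mul_le_mul_of_nonneg_left hb hnn
  · simp_rw [mul_add]
    exact (int_abs N K hK hint hi hj (x0 - 1) y).add (int_abs N K hK hint hi hj (x0 + 1) y)
  · refine Filter.Eventually.of_forall fun p => ?_
    exact (continuous_const.mul (Real.continuous_exp.comp
      ((continuous_id.mul continuous_const).add continuous_const))).continuousAt

lemma aux_iter (n : ℕ) (G : ℕ → ℝ → ℝ)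
    (hderiv : ∀ j < n, ∀ t : ℝ, HasDerivAt (G j) (G (j + 1) t) t) :
    ∀ j ≤ n, iteratedDeriv j (G 0) = G j := by
  intro j hj
  induction j with
  | zero => exact iteratedDeriv_zero
  | succ j ih =>
    rw [iteratedDeriv_succ, ih (le_trans (Nat.le_succ j) hj)]
    exact funext fun t => (hderiv j (lt_of_lt_of_le (Nat.lt_succ_self j) hj) t).deriv

lemma aux_contDiff (n : ℕ) (G : ℕ → ℝ → ℝ)
    (hderiv : ∀ j < n, ∀ t : ℝ, HasDerivAt (G j) (G (j + 1) t) t)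
    (hcont : Continuous (G n)) :
    ContDiff ℝ (n : ℕ∞) (G 0) := by
  have hid := aux_iter n G hderiv
  have : ContDiff ℝ (n : ℕ) (G 0) := by
    rw [contDiff_nat_iff_iteratedDeriv]
    constructor
    · intro m hm
      rw [hid m hm]
      rcases eq_or_lt_of_le hm with rfl | hlt
      · exact hcont
      · have : Differentiable ℝ (G m) := fun t => (hderiv m hlt t).differentiableAt
        exact this.continuous
    · intro m hm
      rw [hid m hm.le]
      exact fun t => (hderiv m hm t).differentiableAt
  exact_mod_cast this

lemma vdm_expand {N : ℕ} (l : Fin N → ℝ) :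
    vdm l = ∑ σ : Equiv.Perm (Fin N),
      ((Equiv.Perm.sign σ : ℤ) : ℝ) * ∏ k, l k ^ ((σ⁻¹ k : Fin N) : ℕ) := by
  unfold vdm
  rw [← Matrix.det_vandermonde, Matrix.det_apply]
  refine Finset.sum_congr rfl fun σ _ => ?_
  rw [Units.smul_def, zsmul_eq_mul]
  congr 1
  rw [← Equiv.prod_comp σ (fun k => l k ^ ((σ⁻¹ k : Fin N) : ℕ))]
  refine Finset.prod_congr rfl fun i _ => ?_
  simp [Matrix.vandermonde_apply]

lemma step_A {N : ℕ} (K : ℝ × ℝ → ℝ) (x y : ℝ) (l m : Fin N → ℝ) :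
    vdm l * vdm m * ∏ k : Fin N, (K (l k, m k) * Real.exp (x * l k + y * m k)) =
    ∑ st : Equiv.Perm (Fin N) × Equiv.Perm (Fin N),
      (((Equiv.Perm.sign st.1 : ℤ) : ℝ) * ((Equiv.Perm.sign st.2 : ℤ) : ℝ)) *
        ∏ k : Fin N, ((l k) ^ ((st.1⁻¹ k : Fin N) : ℕ) * (m k) ^ ((st.2⁻¹ k : Fin N) : ℕ) *
          K (l k, m k) * Real.exp (x * l k + y * m k)) := by
  rw [vdm_expand l, vdm_expand m, Finset.sum_mul_sum, Finset.sum_mul, Fintype.sum_prod_type]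
  refine Finset.sum_congr rfl fun σ _ => ?_
  rw [Finset.sum_mul]
  refine Finset.sum_congr rfl fun τ _ => ?_
  have hp : ∏ k : Fin N, ((l k) ^ ((σ⁻¹ k : Fin N) : ℕ) * (m k) ^ ((τ⁻¹ k : Fin N) : ℕ) *
          K (l k, m k) * Real.exp (x * l k + y * m k)) =
      (∏ k, (l k) ^ ((σ⁻¹ k : Fin N) : ℕ)) * (∏ k, (m k) ^ ((τ⁻¹ k : Fin N) : ℕ)) *
        ∏ k : Fin N, (K (l k, m k) * Real.exp (x * l k + y * m k)) := by
    rw [← Finset.prod_mul_distrib, ← Finset.prod_mul_distrib]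
    exact Finset.prod_congr rfl fun k _ => by ring
  rw [hp]
  ring

lemma step_E {N : ℕ} (A : Matrix (Fin N) (Fin N) ℝ) :
    ∑ st : Equiv.Perm (Fin N) × Equiv.Perm (Fin N),
      (((Equiv.Perm.sign st.1 : ℤ) : ℝ) * ((Equiv.Perm.sign st.2 : ℤ) : ℝ)) *
        ∏ k : Fin N, A (st.1⁻¹ k) (st.2⁻¹ k) = (N.factorial : ℝ) * A.det := by
  rw [Fintype.sum_prod_type]
  have inner : ∀ σ : Equiv.Perm (Fin N),
      ∑ τ : Equiv.Perm (Fin N), (((Equiv.Perm.sign σ : ℤ) : ℝ) * ((Equiv.Perm.sign τ : ℤ) : ℝ)) *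
        ∏ k : Fin N, A (σ⁻¹ k) (τ⁻¹ k) = A.det := by
    intro σ
    have h1 : ((Equiv.Perm.sign σ : ℤ) : ℝ) * ((Equiv.Perm.sign σ : ℤ) : ℝ) = 1 := by
      rcases Int.units_eq_one_or (Equiv.Perm.sign σ) with h | h <;> rw [h] <;> norm_num
    calc ∑ τ : Equiv.Perm (Fin N),
          (((Equiv.Perm.sign σ : ℤ) : ℝ) * ((Equiv.Perm.sign τ : ℤ) : ℝ)) *
            ∏ k : Fin N, A (σ⁻¹ k) (τ⁻¹ k)
        = ∑ ρ : Equiv.Perm (Fin N),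
          (((Equiv.Perm.sign σ : ℤ) : ℝ) * ((Equiv.Perm.sign (σ * ρ) : ℤ) : ℝ)) *
            ∏ k : Fin N, A (σ⁻¹ k) ((σ * ρ)⁻¹ k) := by
          exact (Equiv.sum_comp (Equiv.mulLeft σ) fun τ =>
            (((Equiv.Perm.sign σ : ℤ) : ℝ) * ((Equiv.Perm.sign τ : ℤ) : ℝ)) *
              ∏ k : Fin N, A (σ⁻¹ k) (τ⁻¹ k)).symm
      _ = ∑ ρ : Equiv.Perm (Fin N),
            ((Equiv.Perm.sign ρ : ℤ) : ℝ) * ∏ k : Fin N, A k (ρ⁻¹ k) := by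
          refine Finset.sum_congr rfl fun ρ _ => ?_
          have hs : (((Equiv.Perm.sign σ : ℤ) : ℝ) * ((Equiv.Perm.sign (σ * ρ) : ℤ) : ℝ)) =
              ((Equiv.Perm.sign ρ : ℤ) : ℝ) := by
            rw [Equiv.Perm.sign_mul]
            push_cast
            rw [← mul_assoc, h1, one_mul]
          have hap : ∀ k, (σ * ρ)⁻¹ k = ρ⁻¹ (σ⁻¹ k) := by
            intro k; rw [mul_inv_rev, Equiv.Perm.mul_apply]
          have hprod : ∏ k : Fin N, A (σ⁻¹ k) ((σ * ρ)⁻¹ k) = ∏ k : Fin N, A k (ρ⁻¹ k) := by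
            simp_rw [hap]
            exact Equiv.prod_comp σ⁻¹ (fun k => A k (ρ⁻¹ k))
          rw [hs, hprod]
      _ = ∑ ρ : Equiv.Perm (Fin N),
            ((Equiv.Perm.sign ρ : ℤ) : ℝ) * ∏ k : Fin N, A k (ρ k) := by
          rw [← Equiv.sum_comp (Equiv.inv (Equiv.Perm (Fin N)))
            (fun ρ => ((Equiv.Perm.sign ρ : ℤ) : ℝ) * ∏ k : Fin N, A k (ρ⁻¹ k))]
          refine Finset.sum_congr rfl fun ρ _ => ?_
          simp [Equiv.Perm.sign_inv]
      _ = A.det := by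
          rw [← Matrix.det_transpose, Matrix.det_apply]
          refine (Finset.sum_congr rfl fun ρ _ => ?_).symm
          rw [Units.smul_def, zsmul_eq_mul]
          congr 1
  simp_rw [inner]
  rw [Finset.sum_const, Finset.card_univ, Fintype.card_perm, Fintype.card_fin, nsmul_eq_mul]

lemma andreief (N : ℕ) (K : ℝ × ℝ → ℝ) (hK : Measurable K)
    (hint : ∀ x y : ℝ, Integrable (fun p : ℝ × ℝ =>
      (1 + |p.1|) ^ (N - 1) * (1 + |p.2|) ^ (N - 1) * |K p| *
        Real.exp (x * p.1 + y * p.2)))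
    (x y : ℝ) :
    (1 / (N.factorial : ℝ)) *
        ∫ lam : Fin N → ℝ, ∫ mu : Fin N → ℝ,
          vdm lam * vdm mu *
            ∏ k : Fin N, (K (lam k, mu k) * Real.exp (x * lam k + y * mu k)) =
      Matrix.det (Matrix.of fun i j : Fin N => Fint K (i : ℕ) (j : ℕ) x y) := by
  classical
  set A := Matrix.of fun i j : Fin N => Fint K (i : ℕ) (j : ℕ) x y with hA
  set Φ : (Equiv.Perm (Fin N) × Equiv.Perm (Fin N)) → Fin N → ℝ × ℝ → ℝ :=
    fun st k p => p.1 ^ ((st.1⁻¹ k : Fin N) : ℕ) * p.2 ^ ((st.2⁻¹ k : Fin N) : ℕ) * K p *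
      Real.exp (x * p.1 + y * p.2) with hPhidef
  set c : (Equiv.Perm (Fin N) × Equiv.Perm (Fin N)) → ℝ :=
    fun st => ((Equiv.Perm.sign st.1 : ℤ) : ℝ) * ((Equiv.Perm.sign st.2 : ℤ) : ℝ) with hcdef
  have hΦint : ∀ st k, Integrable (Φ st k) := fun st k =>
    int_main N K hK hint (Nat.le_pred_of_lt (Fin.is_lt _)) (Nat.le_pred_of_lt (Fin.is_lt _)) x y
  have hΦprod : ∀ st k, Integrable (Φ st k) ((volume : Measure ℝ).prod volume) := by
    intro st k; rw [← Measure.volume_eq_prod]; exact hΦint st k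
  set g : (Equiv.Perm (Fin N) × Equiv.Perm (Fin N)) → Fin N → ℝ → ℝ :=
    fun st k a => ∫ b, Φ st k (a, b) with hgdef
  have hg_int : ∀ st k, Integrable (g st k) := fun st k => (hΦprod st k).integral_prod_left
  have hS : ∀ᵐ l : Fin N → ℝ, ∀ st k, Integrable (fun b => Φ st k (l k, b)) := by
    rw [ae_all_iff]; intro st; rw [ae_all_iff]; intro k
    have h1 : ∀ᵐ a : ℝ, Integrable (fun b => Φ st k (a, b)) := (hΦprod st k).prod_right_ae
    rw [ae_iff] at h1 ⊢
    rw [volume_pi]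
    exact Measure.pi_eval_preimage_null (fun _ => (volume : Measure ℝ)) h1
  have hcongr : (fun l : Fin N → ℝ => ∫ m : Fin N → ℝ,
      vdm l * vdm m * ∏ k : Fin N, (K (l k, m k) * Real.exp (x * l k + y * m k)))
      =ᵐ[volume] (fun l => ∑ st : Equiv.Perm (Fin N) × Equiv.Perm (Fin N),
        c st * ∏ k : Fin N, g st k (l k)) := by
    filter_upwards [hS] with l hl
    have e1 : (fun m : Fin N → ℝ => vdm l * vdm m *
        ∏ k : Fin N, (K (l k, m k) * Real.exp (x * l k + y * m k))) =
        fun m => ∑ st : Equiv.Perm (Fin N) × Equiv.Perm (Fin N),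
          c st * ∏ k : Fin N, Φ st k (l k, m k) :=
      funext fun m => (step_A K x y l m).trans rfl
    rw [e1, integral_finset_sum (μ := volume) _ (fun st _ =>
      (Integrable.fintype_prod (f := fun k b => Φ st k (l k, b)) (fun k => hl st k)).const_mul _)]
    refine Finset.sum_congr rfl fun st _ => ?_
    rw [integral_const_mul]
    congr 1
    exact integral_fintype_prod_eq_prod (fun k b => Φ st k (l k, b))
  calc (1 / (N.factorial : ℝ)) *
        ∫ lam : Fin N → ℝ, ∫ mu : Fin N → ℝ,
          vdm lam * vdm mu *
            ∏ k : Fin N, (K (lam k, mu k) * Real.exp (x * lam k + y * mu k))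
      = (1 / (N.factorial : ℝ)) * ∫ l : Fin N → ℝ,
          ∑ st : Equiv.Perm (Fin N) × Equiv.Perm (Fin N),
            c st * ∏ k : Fin N, g st k (l k) := by
        rw [integral_congr_ae hcongr]
    _ = (1 / (N.factorial : ℝ)) *
          ∑ st : Equiv.Perm (Fin N) × Equiv.Perm (Fin N),
            c st * ∏ k : Fin N, ∫ a, g st k a := by
        rw [integral_finset_sum (μ := volume) _ (fun st _ =>
          (Integrable.fintype_prod (fun k => hg_int st k)).const_mul _)]
        congr 1
        refine Finset.sum_congr rfl fun st _ => ?_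
        rw [integral_const_mul]
        congr 1
        exact integral_fintype_prod_eq_prod (fun k => g st k)
    _ = (1 / (N.factorial : ℝ)) *
          ∑ st : Equiv.Perm (Fin N) × Equiv.Perm (Fin N),
            c st * ∏ k : Fin N, A (st.1⁻¹ k) (st.2⁻¹ k) := by
        congr 1
        refine Finset.sum_congr rfl fun st _ => ?_
        congr 1
        refine Finset.prod_congr rfl fun k _ => ?_
        show ∫ a, ∫ b, Φ st k (a, b) = Fint K _ _ x y
        rw [MeasureTheory.integral_integral (hΦprod st k)]
        unfold Fint
        rw [Measure.volume_eq_prod]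
    _ = (1 / (N.factorial : ℝ)) * ((N.factorial : ℝ) * A.det) := by
        rw [← step_E A]
    _ = A.det := by
        field_simp

theorem stmt6 (N : ℕ) (hN : 1 ≤ N) (K : ℝ × ℝ → ℝ) (hK : Measurable K)
    (hint : ∀ x y : ℝ, Integrable (fun p : ℝ × ℝ =>
      (1 + |p.1|) ^ (N - 1) * (1 + |p.2|) ^ (N - 1) * |K p| *
        Real.exp (x * p.1 + y * p.2)))
    (h : ℝ → ℝ → ℝ)
    (hdef : ∀ x y, h x y = ∫ p : ℝ × ℝ, K p * Real.exp (x * p.1 + y * p.2)) :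
    (∀ x : ℝ, ContDiff ℝ ((N - 1 : ℕ) : ℕ∞) (fun y => h x y)) ∧
    (∀ j : ℕ, j ≤ N - 1 → ∀ y : ℝ,
      ContDiff ℝ ((N - 1 : ℕ) : ℕ∞)
        (fun x => iteratedDeriv j (fun y' => h x y') y)) ∧
    (∀ i j : ℕ, i ≤ N - 1 → j ≤ N - 1 → ∀ x y : ℝ,
      iteratedDeriv i (fun x' => iteratedDeriv j (fun y' => h x' y') y) x =
        ∫ p : ℝ × ℝ, p.1 ^ i * p.2 ^ j * K p * Real.exp (x * p.1 + y * p.2)) ∧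
    (∀ x y : ℝ,
      (1 / (N.factorial : ℝ)) *
          ∫ lam : Fin N → ℝ, ∫ mu : Fin N → ℝ,
            vdm lam * vdm mu *
              ∏ k : Fin N, (K (lam k, mu k) * Real.exp (x * lam k + y * mu k)) =
        Matrix.det (Matrix.of fun i j : Fin N =>
          iteratedDeriv (i : ℕ)
            (fun x' => iteratedDeriv (j : ℕ) (fun y' => h x' y') y) x)) := by
  have hM1 : ∀ x : ℝ, (fun y => h x y) = fun y => Fint K 0 0 x y := fun x =>
    funext fun y => by
      rw [hdef x y]
      unfold Fint
      simp only [pow_zero, one_mul]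
  have iterY : ∀ (x : ℝ) (j : ℕ), j ≤ N - 1 →
      iteratedDeriv j (fun y => h x y) = fun y => Fint K 0 j x y := by
    intro x j hj
    rw [hM1 x]
    exact aux_iter (N - 1) (fun j y => Fint K 0 j x y)
      (fun j hj' t => hasDeriv_y N K hK hint (Nat.zero_le _) (Nat.succ_le_of_lt hj') x t) j hj
  have iterX : ∀ (j : ℕ), j ≤ N - 1 → ∀ (y : ℝ) (i : ℕ), i ≤ N - 1 →
      iteratedDeriv i (fun x => Fint K 0 j x y) = fun x => Fint K i j x y := by
    intro j hj y i hi
    exact aux_iter (N - 1) (fun i xx => Fint K i j xx y)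
      (fun i hi' t => hasDeriv_x N K hK hint (Nat.succ_le_of_lt hi') hj t y) i hi
  have part3 : ∀ i j : ℕ, i ≤ N - 1 → j ≤ N - 1 → ∀ x y : ℝ,
      iteratedDeriv i (fun x' => iteratedDeriv j (fun y' => h x' y') y) x =
        ∫ p : ℝ × ℝ, p.1 ^ i * p.2 ^ j * K p * Real.exp (x * p.1 + y * p.2) := by
    intro i j hi hj x y
    have e : (fun x' => iteratedDeriv j (fun y' => h x' y') y) = fun x' => Fint K 0 j x' y :=
      funext fun x' => by rw [iterY x' j hj]
    rw [e, iterX j hj y i hi]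
    rfl
  refine ⟨?_, ?_, part3, ?_⟩
  · intro x
    rw [hM1 x]
    exact aux_contDiff (N - 1) (fun j y => Fint K 0 j x y)
      (fun j hj' t => hasDeriv_y N K hK hint (Nat.zero_le _) (Nat.succ_le_of_lt hj') x t)
      (cont_y N K hK hint (Nat.zero_le _) le_rfl x)
  · intro j hj y
    have e : (fun x => iteratedDeriv j (fun y' => h x y') y) = fun x => Fint K 0 j x y :=
      funext fun x => by rw [iterY x j hj]
    rw [e]
    exact aux_contDiff (N - 1) (fun i xx => Fint K i j xx y)
      (fun i hi' t => hasDeriv_x N K hK hint (Nat.succ_le_of_lt hi') hj t y)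
      (cont_x N K hK hint le_rfl hj y)
  · intro x y
    have hM : (Matrix.of fun i j : Fin N =>
        iteratedDeriv (i : ℕ) (fun x' => iteratedDeriv (j : ℕ) (fun y' => h x' y') y) x) =
        Matrix.of fun i j : Fin N => Fint K (i : ℕ) (j : ℕ) x y := by
      ext i j
      exact part3 i j (Nat.le_pred_of_lt i.isLt) (Nat.le_pred_of_lt j.isLt) x y
    rw [hM]
    exact andreief N K hK hint x y
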